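/- Let d ≥ 1 and −λ > ω > 0, and set k_± = −λ ± √(λ²−ω²). Then the Gaussons φ_{k_−} and φ_{k_+} satisfy ‖φ_{k_−}‖_{L²(ℝ^d)} > ‖φ_{k_+}‖_{L²(ℝ^d)}; equivalently, e^{−k_−/λ}/k_− > e^{−k_+/λ}/k_+. -/

import Mathlib

open MeasureTheory

/-- Key scalar inequality: for `0 < u`, `exp u * (1 - u) < exp (-u) * (1 + u)`. -/
lemma gausson_aux_key {u : ℝ} (hu : 0 < u) :
    Real.exp u * (1 - u) < Real.exp (-u) * (1 + u) := by
  set f : ℝ → ℝ := fun u => Real.exp (-u) * (1 + u) - Real.exp u * (1 - u) with hf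
  have hderiv : ∀ x : ℝ, HasDerivAt f (x * (Real.exp x - Real.exp (-x))) x := by
    intro x
    have h1 : HasDerivAt (fun x : ℝ => Real.exp (-x) * (1 + x))
        (-Real.exp (-x) * (1 + x) + Real.exp (-x) * 1) x := by
      have he : HasDerivAt (fun x : ℝ => Real.exp (-x)) (-Real.exp (-x)) x := by
        simpa [Function.comp_def] using (Real.hasDerivAt_exp (-x)).comp x (hasDerivAt_neg x)
      simpa [Pi.mul_def] using he.mul ((hasDerivAt_id x).const_add 1)
    have h2 : HasDerivAt (fun x : ℝ => Real.exp x * (1 - x))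
        (Real.exp x * (1 - x) + Real.exp x * (-1)) x := by
      simpa [Pi.mul_def] using (Real.hasDerivAt_exp x).mul ((hasDerivAt_id x).const_sub 1)
    have := h1.sub h2
    refine this.congr_deriv ?_
    ring
  have hmono : StrictMonoOn f (Set.Ici (0 : ℝ)) := by
    apply strictMonoOn_of_deriv_pos (convex_Ici 0)
    · exact (Continuous.sub ((Real.continuous_exp.comp continuous_neg).mul (by continuity))
        (Real.continuous_exp.mul (by continuity))).continuousOn
    · intro x hx
      rw [interior_Ici] at hx
      rw [(hderiv x).deriv]
      have : Real.exp (-x) < Real.exp x := Real.exp_lt_exp.2 (by linarith [hx.out])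
      have hx0 : (0:ℝ) < x := hx
      nlinarith
  have h0 : f 0 = 0 := by simp [hf]
  have : f 0 < f u := hmono (Set.self_mem_Ici) (Set.mem_Ici.2 hu.le) hu
  rw [h0] at this
  simp only [hf] at this
  linarith

/-- For `−λ > ω > 0` and `k_± = −λ ± √(λ²−ω²)`, the Gausson `φ_{k₋}` has strictly larger
L² norm than `φ_{k₊}` (stated for the squared L² norms, which are positive); equivalently,
`e^{−k₋/λ}/k₋ > e^{−k₊/λ}/k₊`. -/
theorem gausson_L2_norm_comparison
    (d : ℕ) (hd : 1 ≤ d) (lam ω : ℝ) (hω : 0 < ω) (hlo : ω < -lam)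
    (kp km : ℝ) (hkp : kp = -lam + Real.sqrt (lam ^ 2 - ω ^ 2))
    (hkm : km = -lam - Real.sqrt (lam ^ 2 - ω ^ 2)) :
    (∫ x : EuclideanSpace ℝ (Fin d),
        (Real.exp (-(d * km) / (4 * lam)) * Real.exp (-km * ‖x‖ ^ 2 / 2)) ^ 2)
      > (∫ x : EuclideanSpace ℝ (Fin d),
        (Real.exp (-(d * kp) / (4 * lam)) * Real.exp (-kp * ‖x‖ ^ 2 / 2)) ^ 2)
    ∧ Real.exp (-km / lam) / km > Real.exp (-kp / lam) / kp := by
  have hlam : lam < 0 := by linarith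
  have hlam0 : lam ≠ 0 := ne_of_lt hlam
  set r := Real.sqrt (lam ^ 2 - ω ^ 2) with hr
  have hω2 : ω ^ 2 < lam ^ 2 := by nlinarith
  have hr0 : 0 < r := Real.sqrt_pos.2 (by linarith)
  have hrlt : r < -lam := by
    have : r < Real.sqrt (lam ^ 2) := by
      apply Real.sqrt_lt_sqrt (by linarith) (by nlinarith)
    rwa [Real.sqrt_sq_eq_abs, abs_of_neg hlam] at this
  have hkm0 : 0 < km := by rw [hkm]; linarith
  have hkp0 : 0 < kp := by rw [hkp]; linarith
  -- scalar inequality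
  have hscal : Real.exp (-km / lam) / km > Real.exp (-kp / lam) / kp := by
    set u := r / (-lam) with hu
    have hu0 : 0 < u := div_pos hr0 (by linarith)
    have hu1 : u < 1 := (div_lt_one (by linarith)).2 hrlt
    have key := gausson_aux_key hu0
    -- -km/lam = 1 - u, -kp/lam = 1 + u
    have hm : -km / lam = 1 - u := by
      rw [hkm, hu]; field_simp [hlam0]; ring
    have hp : -kp / lam = 1 + u := by
      rw [hkp, hu]; field_simp [hlam0]; ring
    have hkmv : km = (-lam) * (1 - u) := by
      rw [hkm, hu]; field_simp [hlam0]; ring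
    have hkpv : kp = (-lam) * (1 + u) := by
      rw [hkp, hu]; field_simp [hlam0]; ring
    rw [hm, hp, hkmv, hkpv, Real.exp_add, Real.exp_sub]
    rw [gt_iff_lt, div_lt_div_iff₀ (mul_pos (by linarith) (by linarith)) (mul_pos (by linarith) (by linarith))]
    have hE : 0 < Real.exp 1 := Real.exp_pos 1
    have hL : 0 < -lam := by linarith
    calc Real.exp 1 * Real.exp u * (-lam * (1 - u))
        = (Real.exp 1 * (-lam)) * (Real.exp u * (1 - u)) := by ring
      _ < (Real.exp 1 * (-lam)) * (Real.exp (-u) * (1 + u)) := by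
          apply mul_lt_mul_of_pos_left key (by positivity)
      _ = Real.exp 1 / Real.exp u * (-lam * (1 + u)) := by
          rw [Real.exp_neg]; field_simp
  refine ⟨?_, hscal⟩
  -- compute the integrals
  have hint : ∀ k : ℝ, 0 < k →
      (∫ x : EuclideanSpace ℝ (Fin d),
        (Real.exp (-(d * k) / (4 * lam)) * Real.exp (-k * ‖x‖ ^ 2 / 2)) ^ 2)
      = (Real.pi * (Real.exp (-k / lam) / k)) ^ ((d : ℝ) / 2) := by
    intro k hk
    have : ∀ x : EuclideanSpace ℝ (Fin d),
        (Real.exp (-(d * k) / (4 * lam)) * Real.exp (-k * ‖x‖ ^ 2 / 2)) ^ 2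
        = Real.exp (-(d * k) / (2 * lam)) * Real.exp (-k * ‖x‖ ^ 2) := by
      intro x
      rw [mul_pow, ← Real.exp_nat_mul, ← Real.exp_nat_mul]
      congr 1 <;> · congr 1; push_cast; ring
    simp_rw [this]
    rw [integral_const_mul, GaussianFourier.integral_rexp_neg_mul_sq_norm hk]
    have hdim : Module.finrank ℝ (EuclideanSpace ℝ (Fin d)) = d := by
      simp [finrank_euclideanSpace]
    rw [hdim]
    have h1 : Real.exp (-(d * k) / (2 * lam)) = (Real.exp (-k / lam)) ^ ((d:ℝ)/2) := by
      rw [← Real.exp_one_rpow (-k/lam), ← Real.rpow_mul (Real.exp_pos 1).le,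
        Real.exp_one_rpow]
      congr 1
      field_simp [hlam0]
    rw [h1, Real.div_rpow Real.pi_pos.le hk.le,
      Real.mul_rpow Real.pi_pos.le (by positivity),
      Real.div_rpow (Real.exp_pos _).le hk.le]
    ring
  rw [hint km hkm0, hint kp hkp0]
  apply Real.rpow_lt_rpow (by positivity)
  · exact mul_lt_mul_of_pos_left hscal Real.pi_pos
  · positivity
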